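/- Let y_1, …, y_N ∈ ℝ^m and a^o ∈ ℝ^m. If at least half of the points coincide with a^o, i.e., |{t ∈ {1, …, N} : y_t = a^o}| ≥ N/2, then a^o solves the geometric median problem: Σ_{t=1}^N ‖y_t − a^o‖₂ ≤ Σ_{t=1}^N ‖y_t − a‖₂ for all a ∈ ℝ^m. -/

import Mathlib

open Matrix Finset

/-- The Euclidean norm on `Fin m → ℝ`. -/
noncomputable def enorm (m : ℕ) (v : Fin m → ℝ) : ℝ :=
  Real.sqrt (∑ i, v i ^ 2)

lemma enorm_eq_norm (m : ℕ) (v : Fin m → ℝ) :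
    enorm m v = ‖(WithLp.equiv 2 (Fin m → ℝ)).symm v‖ := by
  simp [_root_.enorm, EuclideanSpace.norm_eq, Real.norm_eq_abs, sq_abs]

lemma enorm_nonneg (m : ℕ) (v : Fin m → ℝ) : 0 ≤ enorm m v := by
  rw [enorm_eq_norm]; exact norm_nonneg _

lemma enorm_sub_rev' (m : ℕ) (u v : Fin m → ℝ) : enorm m (u - v) = enorm m (v - u) := by
  rw [enorm_eq_norm, enorm_eq_norm]
  exact norm_sub_rev ((WithLp.equiv 2 (Fin m → ℝ)).symm u) ((WithLp.equiv 2 (Fin m → ℝ)).symm v)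

lemma enorm_triangle (m : ℕ) (u v w : Fin m → ℝ) :
    enorm m (u - w) ≤ enorm m (u - v) + enorm m (v - w) := by
  rw [enorm_eq_norm, enorm_eq_norm, enorm_eq_norm]
  exact norm_sub_le_norm_sub_add_norm_sub ((WithLp.equiv 2 (Fin m → ℝ)).symm u)
    ((WithLp.equiv 2 (Fin m → ℝ)).symm v) ((WithLp.equiv 2 (Fin m → ℝ)).symm w)

/-- If at least half of the points `y_1, …, y_N ∈ ℝ^m` coincide
with `a^o`, then `a^o` solves the geometric median problem. -/
theorem stmt19 (m N : ℕ) (hm : 1 ≤ m) (hN : 1 ≤ N)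
    (y : Fin N → Fin m → ℝ) (ao : Fin m → ℝ)
    (hcard : ((univ.filter (fun t => y t = ao)).card : ℝ) ≥ (N : ℝ) / 2) :
    ∀ a : Fin m → ℝ, ∑ t, enorm m (y t - ao) ≤ ∑ t, enorm m (y t - a) := by
  intro a
  set S : Finset (Fin N) := univ.filter (fun t => y t = ao) with hS
  set c : ℝ := enorm m (a - ao) with hc
  have hc0 : 0 ≤ c := enorm_nonneg m _
  -- cardinality of complement
  have hScard : ((Sᶜ).card : ℝ) ≤ (S.card : ℝ) := by
    have h1 : (Sᶜ).card = N - S.card := by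
      simp [Finset.card_compl]
    have h2 : S.card ≤ N := by
      simpa using Finset.card_le_card (Finset.subset_univ S)
    have : ((Sᶜ).card : ℝ) = (N : ℝ) - (S.card : ℝ) := by
      rw [h1, Nat.cast_sub h2]
    linarith
  have hsplitL : ∑ t, enorm m (y t - ao) = ∑ t ∈ Sᶜ, enorm m (y t - ao) := by
    rw [← Finset.sum_add_sum_compl S]
    have : ∑ t ∈ S, enorm m (y t - ao) = 0 := by
      apply Finset.sum_eq_zero
      intro t ht
      have : y t = ao := by simpa [hS] using ht
      simp [this, _root_.enorm]
    rw [this, zero_add]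
  have hsplitR : ∑ t, enorm m (y t - a) =
      (S.card : ℝ) * c + ∑ t ∈ Sᶜ, enorm m (y t - a) := by
    rw [← Finset.sum_add_sum_compl S]
    congr 1
    rw [Finset.sum_congr rfl (fun t ht => ?_), Finset.sum_const, nsmul_eq_mul]
    have hyt : y t = ao := by simpa [hS] using ht
    rw [hyt, hc, enorm_sub_rev']
  rw [hsplitL, hsplitR]
  have hstep : ∑ t ∈ Sᶜ, enorm m (y t - ao) ≤
      ∑ t ∈ Sᶜ, (enorm m (y t - a) + c) := by
    apply Finset.sum_le_sum
    intro t _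
    exact enorm_triangle m (y t) a ao
  have : ∑ t ∈ Sᶜ, (enorm m (y t - a) + c) =
      ∑ t ∈ Sᶜ, enorm m (y t - a) + ((Sᶜ).card : ℝ) * c := by
    rw [Finset.sum_add_distrib, Finset.sum_const, nsmul_eq_mul]
  have hmul : ((Sᶜ).card : ℝ) * c ≤ (S.card : ℝ) * c :=
    mul_le_mul_of_nonneg_right hScard hc0
  linarith
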